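/- For ε > 0 define f_ε : ℂ → ℂ by f_ε(0) := 0 and f_ε(z) := z|z|^{2εi} = z e^{iε log(z·z̄)} for z ≠ 0. Then f_ε is a bijection of ℂ with inverse f_ε^{−1}(w) = w|w|^{−2εi}, and there is an absolute constant C such that for every 0 < ε ≤ 1 both f_ε and f_ε^{−1} are Lipschitz with constant at most 1 + Cε; in particular, f_ε is a globally biLipschitz homeomorphism of ℂ ≅ ℝ². -/

import Mathlib

noncomputable section

/-- The logarithmic spiral map `f_ε(z) = z |z|^{2εi} = z e^{2εi log|z|}` (with
`f_ε(0) = 0`, which this formula yields since `Real.log 0 = 0`). -/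
def spiral (ε : ℝ) (z : ℂ) : ℂ :=
  z * Complex.exp (((2 * ε * Real.log (‖z‖) : ℝ) : ℂ) * Complex.I)

lemma spiral_abs (ε : ℝ) (z : ℂ) : ‖spiral ε z‖ = ‖z‖ := by
  simp only [spiral, norm_mul, Complex.norm_exp_ofReal_mul_I, mul_one]

lemma spiral_inv (ε : ℝ) (z : ℂ) : spiral (-ε) (spiral ε z) = z := by
  rw [spiral, spiral_abs, spiral, mul_assoc, ← Complex.exp_add]
  have : ((2 * ε * Real.log (‖z‖) : ℝ) : ℂ) * Complex.I
      + ((2 * (-ε) * Real.log (‖z‖) : ℝ) : ℂ) * Complex.I = 0 := by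
    push_cast; ring
  rw [this, Complex.exp_zero, mul_one]

lemma exp_I_sub_one_le (θ : ℝ) : ‖Complex.exp (θ * Complex.I) - 1‖ ≤ |θ| := by
  have h1 : (Complex.exp (θ * Complex.I) - 1).re = Real.cos θ - 1 := by
    simp [Complex.exp_ofReal_mul_I_re]
  have h2 : (Complex.exp (θ * Complex.I) - 1).im = Real.sin θ := by
    simp [Complex.exp_ofReal_mul_I_im]
  rw [Complex.norm_def, Complex.normSq_apply, h1, h2, ← Real.sqrt_sq_eq_abs]
  apply Real.sqrt_le_sqrt
  have hc : Real.cos (θ / 2) ^ 2 = 1 / 2 + Real.cos θ / 2 := by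
    have := Real.cos_sq (θ / 2)
    rwa [show 2 * (θ / 2) = θ by ring] at this
  nlinarith [Real.sin_sq_le_sq (x := θ / 2), Real.sin_sq_add_cos_sq (θ / 2), hc,
    Real.sin_sq_add_cos_sq θ]

lemma spiral_dist_le_aux (ε : ℝ) (z w : ℂ) (hw : ‖w‖ ≤ ‖z‖) :
    dist (spiral ε z) (spiral ε w) ≤ (1 + 2 * |ε|) * dist z w := by
  have habs : (0:ℝ) ≤ 2 * |ε| := by positivity
  rcases eq_or_ne w 0 with rfl | hw0
  · have : spiral ε (0:ℂ) = 0 := by simp [spiral]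
    rw [this, dist_zero_right, dist_zero_right,
      spiral_abs]
    nlinarith [norm_nonneg z]
  · have hwpos : 0 < ‖w‖ := by
      simpa [norm_pos_iff] using hw0
    have hzpos : 0 < ‖z‖ := lt_of_lt_of_le hwpos hw
    have hz0 : z ≠ 0 := by simpa [norm_pos_iff] using hzpos
    set a : ℝ := 2 * ε * Real.log (‖z‖) with ha
    set b : ℝ := 2 * ε * Real.log (‖w‖) with hb
    -- factor out exp(aI)
    have key : spiral ε z - spiral ε w
        = (z - w * Complex.exp (((b - a : ℝ) : ℂ) * Complex.I))
          * Complex.exp ((a : ℂ) * Complex.I) := by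
      rw [spiral, spiral, ← ha, ← hb]
      rw [sub_mul, mul_assoc, ← Complex.exp_add]
      congr 2
      push_cast; ring
    have hdist : dist (spiral ε z) (spiral ε w)
        = ‖z - w * Complex.exp (((b - a : ℝ) : ℂ) * Complex.I)‖ := by
      rw [Complex.dist_eq, key, norm_mul, Complex.norm_exp_ofReal_mul_I, mul_one]
    rw [hdist]
    have tri : ‖z - w * Complex.exp (((b - a : ℝ) : ℂ) * Complex.I)‖
        ≤ ‖z - w‖
          + ‖w‖ * ‖Complex.exp (((b - a : ℝ) : ℂ) * Complex.I) - 1‖ := by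
      calc ‖z - w * Complex.exp (((b - a : ℝ) : ℂ) * Complex.I)‖
          = ‖(z - w) - w * (Complex.exp (((b - a : ℝ) : ℂ) * Complex.I) - 1)‖ := by
            ring_nf
        _ ≤ ‖z - w‖
            + ‖w * (Complex.exp (((b - a : ℝ) : ℂ) * Complex.I) - 1)‖ := by
            simpa only [] using
              norm_sub_le (z - w) (w * (Complex.exp (((b - a : ℝ) : ℂ) * Complex.I) - 1))
        _ = _ := by rw [norm_mul]
    have hba : |b - a| = 2 * |ε| * (Real.log (‖z‖) - Real.log (‖w‖)) := by
      have hlog : Real.log (‖w‖) ≤ Real.log (‖z‖) :=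
        Real.log_le_log hwpos hw
      have heq : b - a = (2 * ε) * (Real.log (‖w‖) - Real.log (‖z‖)) := by
        rw [hb, ha]; ring
      rw [heq, abs_mul,
        abs_of_nonpos (by linarith :
          Real.log (‖w‖) - Real.log (‖z‖) ≤ 0),
        abs_mul, abs_two]
      ring
    have hexp : ‖Complex.exp (((b - a : ℝ) : ℂ) * Complex.I) - 1‖ ≤ |b - a| :=
      exp_I_sub_one_le (b - a)
    have hloglip : ‖w‖ * (Real.log (‖z‖) - Real.log (‖w‖))
        ≤ ‖z‖ - ‖w‖ := by
      have hx : 0 < ‖z‖ / ‖w‖ := by positivity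
      have := Real.log_le_sub_one_of_pos hx
      rw [Real.log_div (ne_of_gt hzpos) (ne_of_gt hwpos)] at this
      have h2 : ‖w‖ * (Real.log (‖z‖) - Real.log (‖w‖))
          ≤ ‖w‖ * (‖z‖ / ‖w‖ - 1) := by
        exact mul_le_mul_of_nonneg_left this (le_of_lt hwpos)
      calc ‖w‖ * (Real.log (‖z‖) - Real.log (‖w‖))
          ≤ ‖w‖ * (‖z‖ / ‖w‖ - 1) := h2
        _ = ‖z‖ - ‖w‖ := by field_simp
    have hnorm : ‖z‖ - ‖w‖ ≤ ‖z - w‖ := by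
      simpa using norm_sub_norm_le z w
    have hwexp : ‖w‖ * ‖Complex.exp (((b - a : ℝ) : ℂ) * Complex.I) - 1‖
        ≤ 2 * |ε| * ‖z - w‖ := by
      calc ‖w‖ * ‖Complex.exp (((b - a : ℝ) : ℂ) * Complex.I) - 1‖
          ≤ ‖w‖ * |b - a| :=
            mul_le_mul_of_nonneg_left hexp (norm_nonneg w)
        _ = 2 * |ε| * (‖w‖ * (Real.log (‖z‖) - Real.log (‖w‖))) := by
            rw [hba]; ring
        _ ≤ 2 * |ε| * (‖z‖ - ‖w‖) :=
            mul_le_mul_of_nonneg_left hloglip habs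
        _ ≤ 2 * |ε| * ‖z - w‖ :=
            mul_le_mul_of_nonneg_left hnorm habs
    rw [Complex.dist_eq]
    calc ‖z - w * Complex.exp (((b - a : ℝ) : ℂ) * Complex.I)‖
        ≤ ‖z - w‖
          + ‖w‖ * ‖Complex.exp (((b - a : ℝ) : ℂ) * Complex.I) - 1‖ := tri
      _ ≤ ‖z - w‖ + 2 * |ε| * ‖z - w‖ := by linarith
      _ = (1 + 2 * |ε|) * ‖z - w‖ := by ring

lemma spiral_dist_le (ε : ℝ) (z w : ℂ) :
    dist (spiral ε z) (spiral ε w) ≤ (1 + 2 * |ε|) * dist z w := by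
  rcases le_total (‖w‖) (‖z‖) with h | h
  · exact spiral_dist_le_aux ε z w h
  · rw [dist_comm, dist_comm z w]
    exact spiral_dist_le_aux ε w z h

/-- The logarithmic spiral `f_ε(z) = z|z|^{2εi}` is a bijection of `ℂ`
with inverse `f_ε^{-1}(w) = w|w|^{−2εi} = f_{−ε}(w)`, and there is an absolute constant
`C` such that for all `0 < ε ≤ 1` both `f_ε` and `f_ε^{-1}` are Lipschitz with constant
at most `1 + Cε`; in particular `f_ε` is a globally biLipschitz homeomorphism of
`ℂ ≅ ℝ²`. -/
theorem statement16 :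
    ∃ C : ℝ, 0 < C ∧
      ∀ ε : ℝ, 0 < ε → ε ≤ 1 →
        Function.Bijective (spiral ε) ∧
        Function.LeftInverse (spiral (-ε)) (spiral ε) ∧
        Function.RightInverse (spiral (-ε)) (spiral ε) ∧
        LipschitzWith (Real.toNNReal (1 + C * ε)) (spiral ε) ∧
        LipschitzWith (Real.toNNReal (1 + C * ε)) (spiral (-ε)) := by
  refine ⟨2, by norm_num, fun ε hε hε1 => ?_⟩
  have hli : Function.LeftInverse (spiral (-ε)) (spiral ε) := fun z => spiral_inv ε z
  have hri : Function.RightInverse (spiral (-ε)) (spiral ε) := fun w => by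
    have := spiral_inv (-ε) w
    rwa [neg_neg] at this
  have hcoe : ((Real.toNNReal (1 + 2 * ε)) : ℝ) = 1 + 2 * ε :=
    Real.coe_toNNReal _ (by linarith)
  have hlip : ∀ ε' : ℝ, |ε'| = ε → LipschitzWith (Real.toNNReal (1 + 2 * ε)) (spiral ε') := by
    intro ε' hε'
    apply LipschitzWith.of_dist_le_mul
    intro x y
    rw [hcoe]
    have := spiral_dist_le ε' x y
    rwa [hε'] at this
  exact ⟨⟨hli.injective, hri.surjective⟩, hli, hri,
    hlip ε (abs_of_pos hε), hlip (-ε) (by rw [abs_neg, abs_of_pos hε])⟩
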